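/- Let κ > ω be regular, M ≺ H(θ) with λ ⊆ M for some λ with κ < λ < 𝔰_κ, and D = {x ⊆ κ : A* ⊆* x} for an A* ∈ [κ]^κ unsplit by M ∩ P(κ). Define on L = {[f]_D : f ∈ M ∩ κ^κ} the relation [f]_D <_D [g]_D iff {α : f(α) < g(α)} ∈ D. Then (L, <_D) is a linear order, and the set {[c_α]_D : α < κ} of classes of constant functions has a least upper bound in L. -/

import Mathlib

open Cardinal

/-- with `κ` regular uncountable, `M ≺ H(θ)` modelled by its traces
`MS = M ∩ 𝒫(κ)` and `MF = M ∩ κ^κ` (with the closure properties provided by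
elementarity), and `A* ∈ [κ]^κ` unsplit by `MS`, let `D = {x : A* ⊆* x}`.
Then `<_D` linearly orders `L = (M ∩ κ^κ)/∼_D`, and the classes of the constant
functions have a least upper bound in `L`. -/
theorem stmt_6 (κ : Cardinal) (hreg : κ.IsRegular) (hκ : ℵ₀ < κ)
    (MS : Set (Set κ.ord.ToType)) (MF : Set (κ.ord.ToType → κ.ord.ToType))
    -- elementarity: comparison sets of functions in `M` belong to `M`
    (hcmp : ∀ f ∈ MF, ∀ g ∈ MF,
      {α | f α = g α} ∈ MS ∧ {α | f α < g α} ∈ MS)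
    -- `κ ⊆ M`, so all constant functions, and the identity, are in `M`
    (hconst : ∀ a : κ.ord.ToType, (fun _ => a) ∈ MF)
    (hid : id ∈ MF)
    -- `A*` is unsplit by `M ∩ 𝒫(κ)`
    (A : Set κ.ord.ToType) (hA : #↥A = κ)
    (hunsplit : ∀ x ∈ MS, #↥(A \ x) < κ ∨ #↥(A ∩ x) < κ) :
    -- `<_D` is a linear order on the classes: trichotomy and mutual exclusivity
    (∀ f ∈ MF, ∀ g ∈ MF,
      (#↥(A \ {α | f α < g α}) < κ ∨ #↥(A \ {α | f α = g α}) < κ ∨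
        #↥(A \ {α | g α < f α}) < κ) ∧
      ¬(#↥(A \ {α | f α < g α}) < κ ∧ #↥(A \ {α | f α = g α}) < κ) ∧
      ¬(#↥(A \ {α | f α < g α}) < κ ∧ #↥(A \ {α | g α < f α}) < κ) ∧
      ¬(#↥(A \ {α | f α = g α}) < κ ∧ #↥(A \ {α | g α < f α}) < κ)) ∧
    -- the constant functions have a least upper bound in `L`
    (∃ f ∈ MF,
      (∀ a : κ.ord.ToType, #↥(A \ {β | a < f β}) < κ) ∧
      ∀ g ∈ MF, (∀ a : κ.ord.ToType, #↥(A \ {β | a < g β}) < κ) →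
        ¬ #↥(A \ {β | g β < f β}) < κ) := by
  classical
  have haleph : ℵ₀ ≤ κ := hκ.le
  -- union of two small sets is small
  have small_union : ∀ s t : Set κ.ord.ToType,
      #↥s < κ → #↥t < κ → #↥(s ∪ t) < κ := fun s t h1 h2 =>
    (Cardinal.mk_union_le s t).trans_lt (Cardinal.add_lt_of_lt haleph h1 h2)
  have notAsmall : ¬ #↥A < κ := by rw [hA]; exact lt_irrefl κ
  -- if two sets are pointwise-disjoint, then A can't be almost inside both
  have key : ∀ s t : Set κ.ord.ToType, (∀ β, β ∉ s ∨ β ∉ t) →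
      ¬(#↥(A \ s) < κ ∧ #↥(A \ t) < κ) := by
    rintro s t hdisj ⟨h1, h2⟩
    have hsub : A ⊆ (A \ s) ∪ (A \ t) := fun β hβ =>
      (hdisj β).imp (fun h => ⟨hβ, h⟩) (fun h => ⟨hβ, h⟩)
    exact notAsmall ((Cardinal.mk_le_mk_of_subset hsub).trans_lt
      (small_union _ _ h1 h2))
  constructor
  · intro f hf g hg
    refine ⟨?_, ?_, ?_, ?_⟩
    · -- trichotomy
      rcases hunsplit _ (hcmp f hf g hg).2 with h | hL
      · exact Or.inl h
      rcases hunsplit _ (hcmp f hf g hg).1 with h | hE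
      · exact Or.inr (Or.inl h)
      rcases hunsplit _ (hcmp g hg f hf).2 with h | hG
      · exact Or.inr (Or.inr h)
      exfalso
      have hsub : A ⊆ (A ∩ {α | f α < g α}) ∪
          ((A ∩ {α | f α = g α}) ∪ (A ∩ {α | g α < f α})) := by
        intro β hβ
        rcases lt_trichotomy (f β) (g β) with h | h | h
        · exact Or.inl ⟨hβ, h⟩
        · exact Or.inr (Or.inl ⟨hβ, h⟩)
        · exact Or.inr (Or.inr ⟨hβ, h⟩)
      exact notAsmall ((Cardinal.mk_le_mk_of_subset hsub).trans_lt
        (small_union _ _ hL (small_union _ _ hE hG)))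
    · refine key _ _ fun β => ?_
      by_cases h : f β < g β
      · exact Or.inr h.ne
      · exact Or.inl h
    · refine key _ _ fun β => ?_
      by_cases h : f β < g β
      · exact Or.inr (lt_asymm h)
      · exact Or.inl h
    · refine key _ _ fun β => ?_
      by_cases h : f β = g β
      · exact Or.inr (by simp only [Set.mem_setOf_eq, h]; exact lt_irrefl _)
      · exact Or.inl h
  · -- least upper bound of the constants
    -- `id` is an upper bound
    have hid_ub : ∀ a : κ.ord.ToType, #↥(A \ {β | a < id β}) < κ := by
      intro a
      have hsub : A \ {β | a < id β} ⊆ Set.Iic a := by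
        intro β hβ
        have h2 := hβ.2
        simp only [Set.mem_setOf_eq, id_eq] at h2
        exact not_lt.mp h2
      refine (Cardinal.mk_le_mk_of_subset hsub).trans_lt ?_
      have : Set.Iic a = Set.Iio a ∪ {a} := (Set.Iio_union_right).symm
      rw [this]
      exact small_union _ _ (Cardinal.mk_Iio_ord_toType a)
        ((Cardinal.mk_le_one_iff_set_subsingleton.mpr
          (Set.subsingleton_singleton)).trans_lt (Cardinal.one_lt_aleph0.trans hκ))
    by_contra hcon
    push_neg at hcon
    have h : ∀ f ∈ MF, (∀ a : κ.ord.ToType, #↥(A \ {β | a < f β}) < κ) →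
        ∃ g ∈ MF, (∀ a : κ.ord.ToType, #↥(A \ {β | a < g β}) < κ) ∧
          #↥(A \ {β | g β < f β}) < κ := by
      intro f hf hub
      obtain ⟨g, hg, hgub, hgs⟩ := hcon f hf hub
      exact ⟨g, hg, hgub, hgs⟩
    -- build a descending sequence of upper bounds
    set T := {g : κ.ord.ToType → κ.ord.ToType //
        g ∈ MF ∧ ∀ a : κ.ord.ToType, #↥(A \ {β | a < g β}) < κ} with hT
    have step : ∀ p : T, ∃ q : T, #↥(A \ {β | q.1 β < p.1 β}) < κ := by
      rintro ⟨f, hf, hub⟩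
      obtain ⟨g, hg, hgub, hgs⟩ := h f hf hub
      exact ⟨⟨g, hg, hgub⟩, hgs⟩
    choose st hst using step
    set seq : ℕ → T := fun n => st^[n] ⟨id, hid, hid_ub⟩ with hseq
    have hdec : ∀ n, #↥(A \ {β | (seq (n + 1)).1 β < (seq n).1 β}) < κ := by
      intro n
      have : seq (n + 1) = st (seq n) := by
        simp [hseq, Function.iterate_succ_apply']
      rw [this]
      exact hst (seq n)
    set S : Set κ.ord.ToType :=
      ⋃ n : ℕ, A \ {β | (seq (n + 1)).1 β < (seq n).1 β} with hS
    have hSsmall : #↥S < κ := by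
      rw [hS, ← Cardinal.lift_uzero #↥(⋃ n : ℕ, A \ {β | (seq (n + 1)).1 β < (seq n).1 β})]
      refine Cardinal.mk_iUnion_le_sum_mk_lift.trans_lt ?_
      refine Cardinal.sum_lt_lift_of_isRegular hreg ?_ hdec
      simpa using hκ
    have hnsub : ¬ A ⊆ S := fun hsub =>
      notAsmall ((Cardinal.mk_le_mk_of_subset hsub).trans_lt hSsmall)
    obtain ⟨β, hβA, hβS⟩ := Set.not_subset.mp hnsub
    have hchain : ∀ n : ℕ, (seq (n + 1)).1 β < (seq n).1 β := by
      intro n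
      by_contra hn
      exact hβS (Set.mem_iUnion.mpr ⟨n, hβA, hn⟩)
    exact (RelEmbedding.natGT (fun n => (seq n).1 β) hchain).not_wellFounded
      (IsWellFounded.wf)
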